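/- If affine hyperplanes H_1,...,H_m in F^n cover all of J(n,q), then m ≥ q. -/

import Mathlib

open MvPolynomial

lemma totalDegree_symm_le' {F : Type*} [CommSemiring F] {n : ℕ}
    (p : Polynomial (MvPolynomial (Fin n) F)) (d : ℕ)
    (h : ∀ k, p.coeff k ≠ 0 → (p.coeff k).totalDegree + k ≤ d) :
    ((finSuccEquiv F n).symm p).totalDegree ≤ d := by
  set Q := (finSuccEquiv F n).symm p with hQdef
  have hfQ : finSuccEquiv F n Q = p := (finSuccEquiv F n).apply_symm_apply p
  rw [totalDegree]
  apply Finset.sup_le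
  intro m hm
  have hm' : coeff m Q ≠ 0 := mem_support_iff.mp hm
  have h1 : coeff m.tail (p.coeff (m 0)) ≠ 0 := by
    rw [← hfQ, finSuccEquiv_coeff_coeff, Finsupp.cons_tail]; exact hm'
  have hc : p.coeff (m 0) ≠ 0 := fun hc => h1 (by simp [hc])
  have h2 : (p.coeff (m 0)).totalDegree + m 0 ≤ d := h _ hc
  have h3 : (m.tail.sum fun _ e => e) ≤ (p.coeff (m 0)).totalDegree :=
    le_totalDegree (mem_support_iff.mpr h1)
  calc (m.sum fun _ e => e) = ((m.tail.cons (m 0)).sum fun _ e => e) := by rw [Finsupp.cons_tail]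
    _ = m 0 + (m.tail.sum fun _ e => e) := Finsupp.sum_cons _ _ _
    _ ≤ d := by omega

lemma eq_C_of_totalDegree_eq_zero {σ : Type*} {R : Type*} [CommSemiring R]
    {p : MvPolynomial σ R} (h : p.totalDegree = 0) : p = C (coeff 0 p) := by
  classical
  ext m
  rcases eq_or_ne m 0 with rfl | hm
  · simp
  · rw [coeff_C, if_neg (Ne.symm hm)]
    by_contra hc
    have := (totalDegree_eq_zero_iff σ p).mp h m (mem_support_iff.mpr hc)
    exact hm (Finsupp.ext fun x => this x)

lemma keyA {F : Type*} [Field F] :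
    ∀ q n : ℕ, ∀ a : Fin q → F, Function.Injective a →
      ∀ P : MvPolynomial (Fin n) F, P.totalDegree < q →
      (∀ w : Fin n → Fin q, Monotone w → MvPolynomial.eval (a ∘ w) P = 0) → P = 0 := by
  intro q
  induction q using Nat.strong_induction_on with
  | _ q IHq =>
  intro n
  induction n with
  | zero =>
    intro a ha P hdeg hvan
    have h0 := hvan (fun x => x.elim0) (fun x => x.elim0)
    rw [eq_C_of_isEmpty P] at h0 ⊢
    rw [eval_C] at h0
    rw [h0, map_zero]
  | succ n IHn =>
    intro a ha P hdeg hvan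
    have hq : 0 < q := by omega
    set z : Fin q := ⟨0, hq⟩ with hz
    by_cases hP0 : P.totalDegree = 0
    · have h0 := hvan (fun _ => z) (fun _ _ _ => le_rfl)
      rw [eq_C_of_totalDegree_eq_zero hP0, eval_C] at h0
      rw [eq_C_of_totalDegree_eq_zero hP0, h0, map_zero]
    -- now totalDegree P ≥ 1, so q ≥ 2
    have hq2 : 2 ≤ q := by omega
    set y : F := a z with hy
    set p : Polynomial (MvPolynomial (Fin n) F) := finSuccEquiv F n P with hp
    -- Q0 : substitute x0 = y
    set Q0 : MvPolynomial (Fin n) F := p.eval (MvPolynomial.C y) with hQ0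
    have hQ0van : ∀ w' : Fin n → Fin q, Monotone w' → eval (a ∘ w') Q0 = 0 := by
      intro w' hw'
      have hmono : Monotone (Fin.cons z w' : Fin (n+1) → Fin q) := by
        intro s t hst
        rcases Fin.eq_zero_or_eq_succ s with rfl | ⟨s', rfl⟩
        · rcases Fin.eq_zero_or_eq_succ t with rfl | ⟨t', rfl⟩
          · exact le_rfl
          · simp only [Fin.cons_zero, Fin.cons_succ]
            exact Fin.mk_le_of_le_val (Nat.zero_le _)
        · rcases Fin.eq_zero_or_eq_succ t with rfl | ⟨t', rfl⟩
          · exact absurd hst (by simp [Fin.le_def])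
          · simp only [Fin.cons_succ]
            exact hw' (Fin.succ_le_succ_iff.mp hst)
      have hv := hvan _ hmono
      rw [Fin.comp_cons] at hv
      rw [eval_eq_eval_mv_eval'] at hv
      have : eval (a ∘ w') Q0 = Polynomial.eval y (Polynomial.map (eval (a ∘ w')) p) := by
        rw [hQ0, ← Polynomial.eval₂_hom (eval (a ∘ w')) (MvPolynomial.C y),
          Polynomial.eval_map, eval_C]
      rw [this]
      exact hv
    have hQ0deg : Q0.totalDegree < q := by
      have : Q0.totalDegree ≤ P.totalDegree := by
        rw [hQ0, Polynomial.eval_eq_sum_range]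
        apply totalDegree_finsetSum_le
        intro k _
        rcases eq_or_ne (p.coeff k) 0 with h0 | h0
        · simp [h0]
        · calc (p.coeff k * MvPolynomial.C y ^ k).totalDegree
              ≤ (p.coeff k).totalDegree + (MvPolynomial.C y ^ k).totalDegree :=
                totalDegree_mul _ _
            _ ≤ (p.coeff k).totalDegree + k * (MvPolynomial.C y).totalDegree := by
                have := totalDegree_pow (MvPolynomial.C y : MvPolynomial (Fin n) F) k
                omega
            _ ≤ P.totalDegree := by
                have h1 := totalDegree_coeff_finSuccEquiv_add_le P k (by rw [← hp]; exact h0)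
                rw [← hp] at h1
                simp [totalDegree_C]
                omega
      omega
    have hQ00 : Q0 = 0 := IHn a ha Q0 hQ0deg hQ0van
    -- divide
    have hroot : Polynomial.IsRoot p (MvPolynomial.C y) := hQ00
    have hdvd : (Polynomial.X - Polynomial.C (MvPolynomial.C y)) ∣ p :=
      Polynomial.dvd_iff_isRoot.mpr hroot
    set r : Polynomial (MvPolynomial (Fin n) F) := p /ₘ (Polynomial.X - Polynomial.C (MvPolynomial.C y)) with hr
    have hfac : p = (Polynomial.X - Polynomial.C (MvPolynomial.C y)) * r := by
      have hmonic := Polynomial.monic_X_sub_C (MvPolynomial.C y : MvPolynomial (Fin n) F)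
      have := Polynomial.modByMonic_add_div p (Polynomial.X - Polynomial.C (MvPolynomial.C y))
      rw [← this, Polynomial.modByMonic_X_sub_C_eq_C_eval, hroot, map_zero, zero_add]
    set Q : MvPolynomial (Fin (n+1)) F := (finSuccEquiv F n).symm r with hQ
    have hPfac : P = (X 0 - MvPolynomial.C y) * Q := by
      apply (finSuccEquiv F n).injective
      rw [map_mul, ← hp, hfac]
      congr 1
      · have h1 : finSuccEquiv F n (X 0 : MvPolynomial (Fin (n+1)) F) = Polynomial.X :=
          finSuccEquiv_X_zero
        have h2 : finSuccEquiv F n (MvPolynomial.C y : MvPolynomial (Fin (n+1)) F)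
            = Polynomial.C (MvPolynomial.C y) := by
          simp [finSuccEquiv_apply]
        rw [map_sub, h1, h2]
      · exact ((finSuccEquiv F n).apply_symm_apply r).symm
    -- now set up induction on q
    obtain ⟨q', rfl⟩ : ∃ q', q = q' + 1 := ⟨q - 1, by omega⟩
    have hq' : 1 ≤ q' := by omega
    set a' : Fin q' → F := fun k => a k.succ with ha'def
    have ha' : Function.Injective a' := fun s t h => Fin.succ_injective _ (ha h)
    have hQdeg : Q.totalDegree ≤ P.totalDegree - 1 := by
      apply totalDegree_symm_le'
      intro k hk
      have hcoef : r.coeff k = ∑ i ∈ Finset.Icc (k+1) p.natDegree,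
          (MvPolynomial.C y : MvPolynomial (Fin n) F) ^ (i-(k+1)) * p.coeff i :=
        Polynomial.coeff_divByMonic_X_sub_C p (MvPolynomial.C y) k
      rw [hcoef] at hk ⊢
      obtain ⟨i₀, hi₀mem, hi₀ne⟩ := Finset.exists_ne_zero_of_sum_ne_zero hk
      have hpi₀ : p.coeff i₀ ≠ 0 := fun h => hi₀ne (by rw [h, mul_zero])
      have hIcc := Finset.mem_Icc.mp hi₀mem
      have hb₀ : (p.coeff i₀).totalDegree + i₀ ≤ P.totalDegree := by
        have := totalDegree_coeff_finSuccEquiv_add_le P i₀ (by rw [← hp]; exact hpi₀)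
        rwa [← hp] at this
      have hsum : (∑ i ∈ Finset.Icc (k+1) p.natDegree,
          (MvPolynomial.C y : MvPolynomial (Fin n) F) ^ (i-(k+1)) * p.coeff i).totalDegree
          ≤ P.totalDegree - (k+1) := by
        apply totalDegree_finsetSum_le
        intro i hi
        rcases eq_or_ne (p.coeff i) 0 with h0 | h0
        · simp [h0]
        · have hb : (p.coeff i).totalDegree + i ≤ P.totalDegree := by
            have := totalDegree_coeff_finSuccEquiv_add_le P i (by rw [← hp]; exact h0)
            rwa [← hp] at this
          have hik := (Finset.mem_Icc.mp hi).1
          calc ((MvPolynomial.C y : MvPolynomial (Fin n) F) ^ (i-(k+1)) * p.coeff i).totalDegree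
              ≤ ((MvPolynomial.C y : MvPolynomial (Fin n) F) ^ (i-(k+1))).totalDegree
                + (p.coeff i).totalDegree := totalDegree_mul _ _
            _ ≤ (i-(k+1)) * (MvPolynomial.C y : MvPolynomial (Fin n) F).totalDegree
                + (p.coeff i).totalDegree := by
                have := totalDegree_pow (MvPolynomial.C y : MvPolynomial (Fin n) F) (i-(k+1))
                omega
            _ ≤ P.totalDegree - (k+1) := by rw [totalDegree_C]; omega
      omega
    have hQdeg' : Q.totalDegree < q' := by omega
    have hQvan : ∀ w : Fin (n+1) → Fin q', Monotone w → eval (a' ∘ w) Q = 0 := by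
      intro w hw
      have hmono2 : Monotone (fun t => (w t).succ : Fin (n+1) → Fin (q'+1)) :=
        fun s t h => Fin.succ_le_succ_iff.mpr (hw h)
      have hv := hvan _ hmono2
      have heq : a ∘ (fun t => (w t).succ) = a' ∘ w := rfl
      rw [heq, hPfac, map_mul] at hv
      have hne : eval (a' ∘ w) (X 0 - MvPolynomial.C y) ≠ 0 := by
        rw [map_sub, eval_X, eval_C]
        intro h
        have h2 : (w 0).succ = z := ha (sub_eq_zero.mp h)
        have h3 : ((w 0).succ : Fin (q'+1)).val = 0 := by rw [h2]
        simp at h3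
      rcases mul_eq_zero.mp hv with h | h
      · exact absurd h hne
      · exact h
    have hQzero : Q = 0 := IHq q' (by omega) (n+1) a' ha' Q hQdeg' hQvan
    rw [hPfac, hQzero, mul_zero]

theorem stmt_13 {F : Type*} [Field F] (n q m : ℕ) (hn : 1 ≤ n) (hq : 1 ≤ q)
    (i : Fin q → F) (hi : Function.Injective i)
    (L : Fin m → MvPolynomial (Fin n) F)
    (hL : ∀ j, L j ≠ 0 ∧ (L j).totalDegree ≤ 1)
    (hcover : ∀ w : Fin n → Fin q, Monotone w →
      ∃ j, MvPolynomial.eval (fun t => i (w t)) (L j) = 0) :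
    q ≤ m := by
  by_contra hlt
  push_neg at hlt
  set P : MvPolynomial (Fin n) F := ∏ j : Fin m, L j with hP
  have hPne : P ≠ 0 := Finset.prod_ne_zero_iff.mpr fun j _ => (hL j).1
  have hPdeg : P.totalDegree < q := by
    have h1 : P.totalDegree ≤ ∑ j : Fin m, (L j).totalDegree := totalDegree_finset_prod _ _
    have h2 : (∑ j : Fin m, (L j).totalDegree) ≤ ∑ _j : Fin m, 1 :=
      Finset.sum_le_sum fun j _ => (hL j).2
    simp only [Finset.sum_const, Finset.card_univ, Fintype.card_fin, smul_eq_mul, mul_one] at h2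
    omega
  have hPvan : ∀ w : Fin n → Fin q, Monotone w → MvPolynomial.eval (i ∘ w) P = 0 := by
    intro w hw
    obtain ⟨j, hj⟩ := hcover w hw
    rw [hP, map_prod]
    exact Finset.prod_eq_zero (Finset.mem_univ j) hj
  exact hPne (keyA q n i hi P hPdeg hPvan)
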